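/- Let ε ∈ (0,1], and let φ, φ̄, v̄ be smooth on 𝕋^d satisfying: ∫|∇φ|² ≤ Cε², ‖∇φ̄‖_{L^∞} ≤ Cε, ‖∇²v̄‖_{L^∞} ≤ C, and ‖∇φ‖_{L^∞} ≤ C. Define Δ = ∫ (⟨∇v̄⟩(x) − ∇v̄(x)) ∇φ·∇φ dx, where ⟨∇v̄⟩(x) = ∫_0^1 ∇v̄(x + sε∇φ(x)) ds. Then |Δ| ≤ C' ε^{10/3} + C' ∫ |∇φ − ∇φ̄|² dx, with C' depending only on C and d. -/

import Mathlib

open MeasureTheory Real RealInnerProductSpace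

noncomputable section

/-- A fundamental domain of the torus `𝕋^d = ℝ^d/ℤ^d`. -/
def fundDom (d : ℕ) : Set (EuclideanSpace ℝ (Fin d)) := {x | ∀ i, x i ∈ Set.Ioc (0:ℝ) 1}

/-- `ℤ^d`-periodicity of a function on `ℝ^d`, i.e. a function on the torus. -/
def ZPeriodic {d : ℕ} {α : Type*} (f : EuclideanSpace ℝ (Fin d) → α) : Prop :=
  ∀ (x : EuclideanSpace ℝ (Fin d)) (k : Fin d → ℤ), f (WithLp.toLp 2 (fun i => x i + (k i : ℝ))) = f x

lemma fundDom_measurableSet (d : ℕ) : MeasurableSet (fundDom d) := by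
  have : fundDom d = ⋂ i, (fun x : EuclideanSpace ℝ (Fin d) => x i) ⁻¹' Set.Ioc (0:ℝ) 1 := by
    ext x; simp [fundDom, Set.mem_iInter]
  rw [this]
  exact MeasurableSet.iInter fun i => (EuclideanSpace.proj i : EuclideanSpace ℝ (Fin d) →L[ℝ] ℝ).continuous.measurable measurableSet_Ioc

lemma fundDom_volume_lt_top (d : ℕ) : volume (fundDom d) < ⊤ := by
  apply Bornology.IsBounded.measure_lt_top
  rw [isBounded_iff_forall_norm_le]
  refine ⟨Real.sqrt d, fun x hx => ?_⟩
  rw [EuclideanSpace.norm_eq]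
  apply Real.sqrt_le_sqrt
  calc (∑ i, ‖x i‖ ^ 2) ≤ ∑ _i : Fin d, 1 := by
        apply Finset.sum_le_sum
        intro i _
        have h1 := (hx i).1
        have h2 := (hx i).2
        have : |x i| ≤ 1 := abs_le.2 ⟨by linarith, h2⟩
        calc ‖x i‖ ^ 2 = |x i| ^ 2 := by rw [Real.norm_eq_abs]
          _ ≤ 1 ^ 2 := by apply pow_le_pow_left₀ (abs_nonneg _) this _
          _ = 1 := one_pow 2
    _ = (d : ℝ) := by simp

set_option maxHeartbeats 1000000 in
/-- the error term
`Δ = ∫ (⟨∇v̄⟩(x) − ∇v̄(x)) ∇φ·∇φ dx`, with `⟨∇v̄⟩(x) = ∫₀¹ ∇v̄(x + sε∇φ(x)) ds`,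
satisfies `|Δ| ≤ C' ε^{10/3} + C' ∫ |∇φ − ∇φ̄|²`, with `C'` depending only on `C` and `d`. -/
theorem averaged_gradient_error_estimate :
    ∀ (C : ℝ) (d : ℕ), 0 < C → ∃ C' : ℝ, 0 < C' ∧
      ∀ (ε : ℝ) (φ φbar : EuclideanSpace ℝ (Fin d) → ℝ)
        (vbar : EuclideanSpace ℝ (Fin d) → EuclideanSpace ℝ (Fin d)),
        0 < ε → ε ≤ 1 →
        ContDiff ℝ 1 φ → ContDiff ℝ 1 φbar → ContDiff ℝ 2 vbar →
        ZPeriodic φ → ZPeriodic φbar → ZPeriodic vbar →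
        (∫ x in fundDom d, ‖gradient φ x‖ ^ 2) ≤ C * ε ^ 2 →
        (∀ x, ‖gradient φbar x‖ ≤ C * ε) →
        (∀ x, ‖fderiv ℝ (fun y => fderiv ℝ vbar y) x‖ ≤ C) →
        (∀ x, ‖gradient φ x‖ ≤ C) →
        |∫ x in fundDom d,
            ⟪(∫ s in (0:ℝ)..1, fderiv ℝ vbar (x + (s * ε) • gradient φ x) (gradient φ x))
                - fderiv ℝ vbar x (gradient φ x), gradient φ x⟫|
          ≤ C' * ε ^ ((10:ℝ)/3)
            + C' * ∫ x in fundDom d, ‖gradient φ x - gradient φbar x‖ ^ 2 := by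
  intro C d hC
  refine ⟨2 * C ^ 3 + 5 * C ^ 2, by positivity, ?_⟩
  intro ε φ φbar vbar hε hε1 hφ hφbar hv _ _ _ hφL2 hφbarL hv2 hφL
  set g : EuclideanSpace ℝ (Fin d) → EuclideanSpace ℝ (Fin d) := gradient φ with hg
  set gb : EuclideanSpace ℝ (Fin d) → EuclideanSpace ℝ (Fin d) := gradient φbar with hgb
  set R : ℝ := ε ^ ((1:ℝ)/3) + 2 * C * ε with hR
  have hεpow : 0 < ε ^ ((1:ℝ)/3) := Real.rpow_pos_of_pos hε _
  have hRpos : 0 < R := by positivity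
  -- smoothness of `fderiv vbar`
  have hDv1 : ContDiff ℝ 1 (fderiv ℝ vbar) := hv.fderiv_right (by norm_num)
  have hDvdiff : Differentiable ℝ (fderiv ℝ vbar) := hDv1.differentiable one_ne_zero
  -- Lipschitz bound
  have hlip : ∀ x y : EuclideanSpace ℝ (Fin d),
      ‖fderiv ℝ vbar y - fderiv ℝ vbar x‖ ≤ C * ‖y - x‖ := by
    intro x y
    exact Convex.norm_image_sub_le_of_norm_fderiv_le
      (fun z _ => hDvdiff z) (fun z _ => hv2 z) convex_univ (Set.mem_univ x) (Set.mem_univ y)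
  -- pointwise bound
  have key : ∀ x,
      |⟪(∫ s in (0:ℝ)..1, fderiv ℝ vbar (x + (s * ε) • g x) (g x))
          - fderiv ℝ vbar x (g x), g x⟫|
        ≤ C * ε * R * ‖g x‖ ^ 2 + 4 * C ^ 2 * ‖g x - gb x‖ ^ 2 := by
    intro x
    have hcont : Continuous fun s : ℝ => fderiv ℝ vbar (x + (s * ε) • g x) (g x) := by
      apply Continuous.clm_apply _ continuous_const
      exact hDv1.continuous.comp (continuous_const.add ((continuous_id.mul continuous_const).smul continuous_const))
    have hint : IntervalIntegrable (fun s : ℝ => fderiv ℝ vbar (x + (s * ε) • g x) (g x))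
        volume 0 1 := hcont.intervalIntegrable 0 1
    have hsplit : (∫ s in (0:ℝ)..1, fderiv ℝ vbar (x + (s * ε) • g x) (g x))
          - fderiv ℝ vbar x (g x)
        = ∫ s in (0:ℝ)..1,
            (fderiv ℝ vbar (x + (s * ε) • g x) (g x) - fderiv ℝ vbar x (g x)) := by
      rw [intervalIntegral.integral_sub hint intervalIntegrable_const,
        intervalIntegral.integral_const]
      simp
    have hnormint : ‖(∫ s in (0:ℝ)..1, fderiv ℝ vbar (x + (s * ε) • g x) (g x))
          - fderiv ℝ vbar x (g x)‖ ≤ C * ε * ‖g x‖ ^ 2 := by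
      rw [hsplit]
      have := intervalIntegral.norm_integral_le_of_norm_le_const
        (C := C * ε * ‖g x‖ ^ 2) (a := (0:ℝ)) (b := 1)
        (f := fun s => fderiv ℝ vbar (x + (s * ε) • g x) (g x) - fderiv ℝ vbar x (g x)) ?_
      · simpa using this
      · intro s hs
        rw [Set.uIoc_of_le (by norm_num : (0:ℝ) ≤ 1)] at hs
        show ‖fderiv ℝ vbar (x + (s * ε) • g x) (g x) - fderiv ℝ vbar x (g x)‖
            ≤ C * ε * ‖g x‖ ^ 2
        have hs0 : 0 < s := hs.1
        have hs1 : s ≤ 1 := hs.2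
        have h1 : fderiv ℝ vbar (x + (s * ε) • g x) (g x) - fderiv ℝ vbar x (g x)
            = (fderiv ℝ vbar (x + (s * ε) • g x) - fderiv ℝ vbar x) (g x) := by
          simp [ContinuousLinearMap.sub_apply]
        rw [h1]
        calc ‖(fderiv ℝ vbar (x + (s * ε) • g x) - fderiv ℝ vbar x) (g x)‖
            ≤ ‖fderiv ℝ vbar (x + (s * ε) • g x) - fderiv ℝ vbar x‖ * ‖g x‖ :=
              ContinuousLinearMap.le_opNorm _ _
          _ ≤ (C * ‖x + (s * ε) • g x - x‖) * ‖g x‖ := by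
              apply mul_le_mul_of_nonneg_right (hlip _ _) (norm_nonneg _)
          _ = C * (s * ε) * ‖g x‖ * ‖g x‖ := by
              rw [add_sub_cancel_left, norm_smul, Real.norm_eq_abs,
                abs_of_pos (by positivity : (0:ℝ) < s * ε)]
              ring
          _ ≤ C * ε * ‖g x‖ ^ 2 := by
              have h0 := mul_le_mul_of_nonneg_right hs1
                (show (0:ℝ) ≤ C * ε * ‖g x‖ ^ 2 by positivity)
              nlinarith [h0]
    have habs : |⟪(∫ s in (0:ℝ)..1, fderiv ℝ vbar (x + (s * ε) • g x) (g x))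
          - fderiv ℝ vbar x (g x), g x⟫| ≤ C * ε * ‖g x‖ ^ 2 * ‖g x‖ :=
      le_trans (abs_real_inner_le_norm _ _)
        (mul_le_mul_of_nonneg_right hnormint (norm_nonneg _))
    by_cases hcase : ‖g x‖ ≤ R
    · have : C * ε * ‖g x‖ ^ 2 * ‖g x‖ ≤ C * ε * R * ‖g x‖ ^ 2 := by
        have h0 := mul_le_mul_of_nonneg_left hcase
          (show (0:ℝ) ≤ C * ε * ‖g x‖ ^ 2 by positivity)
        linarith
      have h2 : (0:ℝ) ≤ 4 * C ^ 2 * ‖g x - gb x‖ ^ 2 := by positivity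
      linarith [habs]
    · push_neg at hcase
      -- ‖g x‖ > R ≥ 2Cε ≥ 2‖gb x‖, so ‖g x‖ ≤ 2 ‖g x - gb x‖
      have hgbx : ‖gb x‖ ≤ C * ε := hφbarL x
      have hR2 : 2 * (C * ε) ≤ R := by
        rw [hR]; nlinarith [hεpow.le]
      have hlow : ‖g x‖ ≤ 2 * ‖g x - gb x‖ := by
        have := norm_sub_norm_le (g x) (gb x)
        have h3 : ‖g x‖ - ‖gb x‖ ≤ ‖g x - gb x‖ := this
        linarith
      have hgC : ‖g x‖ ≤ C := hφL x
      have : C * ε * ‖g x‖ ^ 2 * ‖g x‖ ≤ 4 * C ^ 2 * ‖g x - gb x‖ ^ 2 := by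
        have hg0 : (0:ℝ) ≤ ‖g x‖ := norm_nonneg _
        have hd0 : (0:ℝ) ≤ ‖g x - gb x‖ := norm_nonneg _
        have hsq : ‖g x‖ ^ 2 ≤ 4 * ‖g x - gb x‖ ^ 2 := by nlinarith [hlow, hg0, hd0]
        have step1 : C * ε * ‖g x‖ ^ 2 * ‖g x‖ ≤ C * ε * ‖g x‖ ^ 2 * C := by
          apply mul_le_mul_of_nonneg_left hgC (by positivity)
        have step2 := mul_le_mul_of_nonneg_left hsq
          (show (0:ℝ) ≤ C * ε * C by positivity)
        have step3 := mul_le_mul_of_nonneg_right hε1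
          (show (0:ℝ) ≤ 4 * C ^ 2 * ‖g x - gb x‖ ^ 2 by positivity)
        nlinarith [step1, step2, step3]
      have h2 : (0:ℝ) ≤ C * ε * R * ‖g x‖ ^ 2 := by positivity
      linarith [habs]
  -- integrability of the bounding function
  have hgcont : Continuous g := by
    have : Continuous (fderiv ℝ φ) := hφ.continuous_fderiv one_ne_zero
    exact (InnerProductSpace.toDual ℝ _).symm.continuous.comp this
  have hgbcont : Continuous gb := by
    have : Continuous (fderiv ℝ φbar) := hφbar.continuous_fderiv one_ne_zero
    exact (InnerProductSpace.toDual ℝ _).symm.continuous.comp this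
  have hfin := fundDom_volume_lt_top d
  have i1 : IntegrableOn (fun x => ‖g x‖ ^ 2) (fundDom d) := by
    apply Integrable.mono' (g := fun _ => C ^ 2)
      (integrableOn_const hfin.ne)
      ((hgcont.norm.pow 2).aestronglyMeasurable)
    filter_upwards with x
    show ‖‖g x‖ ^ 2‖ ≤ C ^ 2
    rw [Real.norm_eq_abs, abs_of_nonneg (by positivity)]
    have := hφL x
    nlinarith [norm_nonneg (g x)]
  have i2 : IntegrableOn (fun x => ‖g x - gb x‖ ^ 2) (fundDom d) := by
    apply Integrable.mono' (g := fun _ => (2 * C) ^ 2)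
      (integrableOn_const hfin.ne)
      (((hgcont.sub hgbcont).norm.pow 2).aestronglyMeasurable)
    filter_upwards with x
    show ‖‖g x - gb x‖ ^ 2‖ ≤ (2 * C) ^ 2
    rw [Real.norm_eq_abs, abs_of_nonneg (by positivity)]
    have h1 : ‖g x - gb x‖ ≤ ‖g x‖ + ‖gb x‖ := norm_sub_le _ _
    have h2 := hφL x
    have h3 := hφbarL x
    have h4 : C * ε ≤ C := by nlinarith
    nlinarith [norm_nonneg (g x - gb x)]
  -- the main estimate
  have hmain : |∫ x in fundDom d,
      ⟪(∫ s in (0:ℝ)..1, fderiv ℝ vbar (x + (s * ε) • g x) (g x))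
          - fderiv ℝ vbar x (g x), g x⟫|
      ≤ C * ε * R * (∫ x in fundDom d, ‖g x‖ ^ 2)
        + 4 * C ^ 2 * (∫ x in fundDom d, ‖g x - gb x‖ ^ 2) := by
    have hb : Integrable (fun x => C * ε * R * ‖g x‖ ^ 2 + 4 * C ^ 2 * ‖g x - gb x‖ ^ 2)
        (volume.restrict (fundDom d)) := (i1.const_mul _).add (i2.const_mul _)
    have := norm_integral_le_of_norm_le (μ := volume.restrict (fundDom d))
      (f := fun x => ⟪(∫ s in (0:ℝ)..1, fderiv ℝ vbar (x + (s * ε) • g x) (g x))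
          - fderiv ℝ vbar x (g x), g x⟫) hb ?_
    · rw [Real.norm_eq_abs] at this
      calc |∫ x in fundDom d, ⟪(∫ s in (0:ℝ)..1, fderiv ℝ vbar (x + (s * ε) • g x) (g x))
              - fderiv ℝ vbar x (g x), g x⟫|
          ≤ ∫ x in fundDom d,
              (C * ε * R * ‖g x‖ ^ 2 + 4 * C ^ 2 * ‖g x - gb x‖ ^ 2) := this
        _ = C * ε * R * (∫ x in fundDom d, ‖g x‖ ^ 2)
              + 4 * C ^ 2 * (∫ x in fundDom d, ‖g x - gb x‖ ^ 2) := by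
            rw [integral_add (i1.const_mul _) (i2.const_mul _),
              integral_const_mul, integral_const_mul]
    · filter_upwards with x
      rw [Real.norm_eq_abs]
      exact key x
  -- finish
  have hint1 : C * ε * R * (∫ x in fundDom d, ‖g x‖ ^ 2) ≤ C * ε * R * (C * ε ^ 2) := by
    apply mul_le_mul_of_nonneg_left hφL2 (by positivity)
  have hpow : C * ε * R * (C * ε ^ 2) ≤ (C ^ 2 + 2 * C ^ 3) * ε ^ ((10:ℝ)/3) := by
    have h1 : ε ^ (3:ℕ) * ε ^ ((1:ℝ)/3) = ε ^ ((10:ℝ)/3) := by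
      rw [← Real.rpow_natCast ε 3, ← Real.rpow_add hε]
      norm_num
    have h2 : ε ^ (4:ℕ) ≤ ε ^ ((10:ℝ)/3) := by
      rw [← Real.rpow_natCast ε 4]
      exact Real.rpow_le_rpow_of_exponent_ge hε hε1 (by norm_num)
    have hexp : C * ε * R * (C * ε ^ 2)
        = C ^ 2 * (ε ^ (3:ℕ) * ε ^ ((1:ℝ)/3)) + 2 * C ^ 3 * ε ^ (4:ℕ) := by
      rw [hR]; ring
    rw [hexp, h1]
    have h3 := mul_le_mul_of_nonneg_left h2 (show (0:ℝ) ≤ 2 * C ^ 3 by positivity)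
    linarith [h3]
  have hd2nonneg : (0:ℝ) ≤ ∫ x in fundDom d, ‖g x - gb x‖ ^ 2 :=
    integral_nonneg fun x => by positivity
  have hεnonneg : (0:ℝ) ≤ ε ^ ((10:ℝ)/3) := Real.rpow_nonneg hε.le _
  calc |∫ x in fundDom d, ⟪(∫ s in (0:ℝ)..1, fderiv ℝ vbar (x + (s * ε) • g x) (g x))
          - fderiv ℝ vbar x (g x), g x⟫|
      ≤ C * ε * R * (∫ x in fundDom d, ‖g x‖ ^ 2)
          + 4 * C ^ 2 * (∫ x in fundDom d, ‖g x - gb x‖ ^ 2) := hmain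
    _ ≤ (C ^ 2 + 2 * C ^ 3) * ε ^ ((10:ℝ)/3)
          + 4 * C ^ 2 * (∫ x in fundDom d, ‖g x - gb x‖ ^ 2) := by
        exact add_le_add (le_trans hint1 hpow) le_rfl
    _ ≤ (2 * C ^ 3 + 5 * C ^ 2) * ε ^ ((10:ℝ)/3)
          + (2 * C ^ 3 + 5 * C ^ 2) * (∫ x in fundDom d, ‖g x - gb x‖ ^ 2) := by
        have hc3 : (0:ℝ) ≤ C ^ 3 := by positivity
        have hc2 : (0:ℝ) ≤ C ^ 2 := by positivity
        nlinarith
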